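/- In the HCV model with controls eps, rho in [0,1], along any solution with nonnegative state, the quantity N = T + I satisfies dN/dt <= s + r*N*(1 - N/T_max) - min(d, delta)*N; consequently if N(0) <= N* where N* is the positive root of s + r*x*(1 - x/T_max) - min(d,delta)*x = 0, then N(t) <= N* for all t >= 0. -/
import Mathlib

theorem stmt_13 (s r d delta beta Tmax : ℝ)
    (hs : 0 < s) (hr : 0 < r) (hd : 0 < d) (hdelta : 0 < delta)
    (hbeta : 0 < beta) (hT : 0 < Tmax) (eps rho : ℝ)
    (heps : eps ∈ Set.Icc (0:ℝ) 1) (hrho : rho ∈ Set.Icc (0:ℝ) 1)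
    (T I VI : ℝ → ℝ)
    (hTnn : ∀ t, 0 ≤ t → 0 ≤ T t) (hInn : ∀ t, 0 ≤ t → 0 ≤ I t)
    (hVInn : ∀ t, 0 ≤ t → 0 ≤ VI t)
    (hdT : ∀ t, 0 ≤ t → HasDerivAt T
      (s + r * T t * (1 - (T t + I t) / Tmax) - d * T t - beta * VI t * T t) t)
    (hdI : ∀ t, 0 ≤ t → HasDerivAt I
      (beta * VI t * T t + r * I t * (1 - (T t + I t) / Tmax) - delta * I t) t)
    (Nstar : ℝ) (hNstar : 0 < Nstar)
    (hNroot : s + r * Nstar * (1 - Nstar / Tmax) - min d delta * Nstar = 0) :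
    let N : ℝ → ℝ := fun t => T t + I t
    (∀ t, 0 ≤ t →
      (s + r * (T t) * (1 - (T t + I t) / Tmax) - d * T t - beta * VI t * T t) +
      (beta * VI t * T t + r * (I t) * (1 - (T t + I t) / Tmax) - delta * I t) ≤
        s + r * N t * (1 - N t / Tmax) - min d delta * N t) ∧
    (N 0 ≤ Nstar → ∀ t, 0 ≤ t → N t ≤ Nstar) := by
  intro N
  have hmind : min d delta ≤ d := min_le_left _ _
  have hmindel : min d delta ≤ delta := min_le_right _ _
  -- the key pointwise inequality
  have hineq : ∀ t, 0 ≤ t →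
      (s + r * (T t) * (1 - (T t + I t) / Tmax) - d * T t - beta * VI t * T t) +
      (beta * VI t * T t + r * (I t) * (1 - (T t + I t) / Tmax) - delta * I t) ≤
        s + r * (T t + I t) * (1 - (T t + I t) / Tmax) - min d delta * (T t + I t) := by
    intro t ht
    have h1 := hTnn t ht
    have h2 := hInn t ht
    nlinarith [mul_nonneg (sub_nonneg.2 hmind) h1, mul_nonneg (sub_nonneg.2 hmindel) h2]
  -- f is negative above Nstar
  have hneg : ∀ x : ℝ, Nstar < x →
      s + r * x * (1 - x / Tmax) - min d delta * x < 0 := by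
    intro x hx
    have hx0 : 0 < x := hNstar.trans hx
    have hroot' : Tmax * s + r * Nstar * Tmax - r * Nstar ^ 2 - min d delta * Nstar * Tmax = 0 := by
      have := hNroot
      field_simp at this
      nlinarith [this]
    rw [show s + r * x * (1 - x / Tmax) - min d delta * x =
        (Tmax * s + r * x * Tmax - r * x ^ 2 - min d delta * x * Tmax) / Tmax by
          field_simp; ring]
    apply div_neg_of_neg_of_pos _ hT
    nlinarith [mul_pos hT hs, mul_pos (sub_pos.2 hx) hNstar, mul_pos hr hx0,
      mul_pos (mul_pos hr hx0) (sub_pos.2 hx), sq_nonneg (x - Nstar)]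
  refine ⟨hineq, ?_⟩
  intro h0 t1 ht1
  by_contra hgt
  push_neg at hgt
  -- N continuous on [0, ∞)
  have hderiv : ∀ t, 0 ≤ t → HasDerivAt N
      ((s + r * T t * (1 - (T t + I t) / Tmax) - d * T t - beta * VI t * T t) +
       (beta * VI t * T t + r * I t * (1 - (T t + I t) / Tmax) - delta * I t)) t :=
    fun t ht => (hdT t ht).add (hdI t ht)
  have hcont : ∀ t, 0 ≤ t → ContinuousAt N t := fun t ht => (hderiv t ht).continuousAt
  set S : Set ℝ := {u | u ∈ Set.Icc 0 t1 ∧ N u ≤ Nstar} with hS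
  have hScl : IsClosed S := by
    have : S = Set.Icc 0 t1 ∩ N ⁻¹' Set.Iic Nstar := rfl
    rw [this]
    exact (ContinuousOn.preimage_isClosed_of_isClosed
      (fun u hu => (hcont u hu.1).continuousWithinAt) isClosed_Icc isClosed_Iic)
  have hSne : S.Nonempty := ⟨0, ⟨le_refl 0, ht1⟩, h0⟩
  have hSbd : BddAbove S := ⟨t1, fun u hu => hu.1.2⟩
  set t0 := sSup S with ht0
  have ht0S : t0 ∈ S := hScl.csSup_mem hSne hSbd
  obtain ⟨⟨ht00, ht0t1⟩, hNt0⟩ := ht0S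
  have ht0lt : t0 < t1 := lt_of_le_of_ne ht0t1 fun h => (not_le.2 hgt) (h ▸ hNt0)
  have habove : ∀ u, t0 < u → u ≤ t1 → Nstar < N u := by
    intro u hu hu1
    by_contra hle
    push_neg at hle
    have huS : u ∈ S := ⟨⟨ht00.trans hu.le, hu1⟩, hle⟩
    exact absurd (le_csSup hSbd huS) (not_le.2 hu)
  have hanti : StrictAntiOn N (Set.Icc t0 t1) := by
    apply strictAntiOn_of_deriv_neg (convex_Icc _ _)
    · intro u hu
      exact (hcont u (ht00.trans hu.1)).continuousWithinAt
    · intro u hu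
      rw [interior_Icc] at hu
      have hu0 : 0 ≤ u := ht00.trans hu.1.le
      rw [(hderiv u hu0).deriv]
      calc _ ≤ s + r * (T u + I u) * (1 - (T u + I u) / Tmax) - min d delta * (T u + I u) :=
            hineq u hu0
        _ < 0 := hneg _ (habove u hu.1 hu.2.le)
  have := hanti ⟨le_refl t0, ht0lt.le⟩ ⟨ht0lt.le, le_refl t1⟩ ht0lt
  have : N t1 < Nstar := this.trans_le hNt0
  exact absurd this (not_lt.2 hgt.le)
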